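/- (Theorem 3.2, case III: θ_n ≡ 1.) Let H be a real Hilbert space, A : H → Set H a monotone set-valued operator, γ > 0, and B : H → H a γ-cocoercive operator. Assume the solution set Ω = {x ∈ H : 0 ∈ A x + B x} is nonempty and that the graph of A + B is sequentially weakly–strongly closed: whenever y_k converges weakly to ȳ and u_k ∈ A(y_k) + B(y_k) with ‖u_k‖ → 0, then 0 ∈ A(ȳ) + B(ȳ). Let ε > 0, and for each n ≥ 1 let τ_n ∈ (ε, 2γ − ε), let J_n : H → H be a resolvent of τ_n·A, and let α_n, β_n ∈ (0,1) with α_n + β_n ≤ 1, liminf_{n→∞} α_n > 0, limsup_{n→∞} α_n < 1, lim_{n→∞} β_n = 0 and ∑_{n=0}^∞ β_n = ∞. Given x_1 ∈ H, define for n ≥ 1: x_{n+1} = (1 − α_n − β_n)·x_n + α_n·J_n(x_n − τ_n·B x_n). Then {x_n} converges in norm to the point z ∈ Ω of minimal norm, i.e., the unique z ∈ Ω satisfying ⟨−z, q − z⟩ ≤ 0 for all q ∈ Ω. -/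

import Mathlib

open Filter
open scoped RealInnerProductSpace

set_option maxHeartbeats 16000000

lemma exists_weak_subseq {H : Type*} [NormedAddCommGroup H] [InnerProductSpace ℝ H]
    [CompleteSpace H] (x : ℕ → H) (M : ℝ) (hM : ∀ k, ‖x k‖ ≤ M) :
    ∃ (w : H) (φ : ℕ → ℕ), StrictMono φ ∧
      ∀ v : H, Tendsto (fun k => ⟪x (φ k), v⟫) atTop (nhds ⟪w, v⟫) := by
  have hM0 : 0 ≤ M := le_trans (norm_nonneg _) (hM 0)
  -- extract subsequence with all pairwise inner products converging
  have hmem : ∀ k, (fun j => ⟪x k, x j⟫) ∈ Set.univ.pi (fun _ : ℕ => Set.Icc (-(M*M)) (M*M)) := by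
    intro k
    rw [Set.mem_univ_pi]
    intro j
    have h1 := abs_real_inner_le_norm (x k) (x j)
    have h2 : ‖x k‖ * ‖x j‖ ≤ M * M :=
      mul_le_mul (hM k) (hM j) (norm_nonneg _) hM0
    have := abs_le.mp (h1.trans h2)
    exact ⟨this.1, this.2⟩
  have hcomp : IsCompact (Set.univ.pi (fun _ : ℕ => Set.Icc (-(M*M)) (M*M))) :=
    isCompact_univ_pi fun _ => isCompact_Icc
  obtain ⟨ℓ, -, φ, hφ, hconv⟩ := hcomp.tendsto_subseq hmem
  have hpt : ∀ j, Tendsto (fun k => ⟪x (φ k), x j⟫) atTop (nhds (ℓ j)) := by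
    intro j
    exact (tendsto_pi_nhds.mp hconv) j
  -- the closed span
  set S : Submodule ℝ H := (Submodule.span ℝ (Set.range x)).topologicalClosure with hS
  haveI : CompleteSpace S := (Submodule.isClosed_topologicalClosure _).completeSpace_coe
  have hxS : ∀ k, x k ∈ S :=
    fun k => Submodule.le_topologicalClosure _ (Submodule.subset_span ⟨k, rfl⟩)
  -- convergence for elements of the span
  have hspan : ∀ v ∈ Submodule.span ℝ (Set.range x),
      ∃ L, Tendsto (fun k => ⟪x (φ k), v⟫) atTop (nhds L) := by
    intro v hv
    induction hv using Submodule.span_induction with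
    | mem v hv =>
      obtain ⟨j, rfl⟩ := hv
      exact ⟨ℓ j, hpt j⟩
    | zero => exact ⟨0, by simpa using tendsto_const_nhds⟩
    | add u v _ _ hu hv =>
      obtain ⟨Lu, hLu⟩ := hu; obtain ⟨Lv, hLv⟩ := hv
      exact ⟨Lu + Lv, by simpa [inner_add_right] using hLu.add hLv⟩
    | smul r v _ hv =>
      obtain ⟨Lv, hLv⟩ := hv
      exact ⟨r * Lv, by simpa [real_inner_smul_right] using hLv.const_mul r⟩
  -- convergence for elements of S (closure)
  have hScv : ∀ v ∈ S, ∃ L, Tendsto (fun k => ⟪x (φ k), v⟫) atTop (nhds L) := by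
    intro v hv
    have hcauchy : CauchySeq (fun k => ⟪x (φ k), v⟫) := by
      rw [Metric.cauchySeq_iff]
      intro η hη
      have h3 : (0:ℝ) < η / (3 * (M + 1)) := by positivity
      have hv' : v ∈ closure ((Submodule.span ℝ (Set.range x) : Submodule ℝ H) : Set H) := hv
      rw [Metric.mem_closure_iff] at hv'
      obtain ⟨w, hwm, hwd⟩ := hv' _ h3
      obtain ⟨L, hL⟩ := hspan w hwm
      have hc : CauchySeq (fun k => ⟪x (φ k), w⟫) := hL.cauchySeq
      rw [Metric.cauchySeq_iff] at hc
      obtain ⟨N, hN⟩ := hc (η/3) (by positivity)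
      refine ⟨N, fun m hm n hn => ?_⟩
      have key : ∀ k, |⟪x (φ k), v⟫ - ⟪x (φ k), w⟫| ≤ M * (η / (3 * (M + 1))) := by
        intro k
        have : ⟪x (φ k), v⟫ - ⟪x (φ k), w⟫ = ⟪x (φ k), v - w⟫ := by
          rw [inner_sub_right]
        rw [this]
        calc |⟪x (φ k), v - w⟫| ≤ ‖x (φ k)‖ * ‖v - w‖ := abs_real_inner_le_norm _ _
          _ ≤ M * (η / (3 * (M + 1))) := by
              apply mul_le_mul (hM _) _ (norm_nonneg _) hM0
              rw [dist_eq_norm] at hwd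
              exact hwd.le
      have hMle : M * (η / (3 * (M + 1))) ≤ η/3 := by
        have he : M * (η / (3 * (M + 1))) = (M*η)/(3*(M+1)) := by ring
        rw [he, div_le_div_iff₀ (by positivity) (by positivity : (0:ℝ) < 3)]
        nlinarith
      have h4 := hN m hm n hn
      rw [Real.dist_eq] at h4 ⊢
      have t1 : |⟪x (φ m), v⟫ - ⟪x (φ n), v⟫| ≤ |⟪x (φ m), v⟫ - ⟪x (φ m), w⟫| + |⟪x (φ m), w⟫ - ⟪x (φ n), v⟫| := abs_sub_le _ _ _
      have t2 : |⟪x (φ m), w⟫ - ⟪x (φ n), v⟫| ≤ |⟪x (φ m), w⟫ - ⟪x (φ n), w⟫| + |⟪x (φ n), w⟫ - ⟪x (φ n), v⟫| := abs_sub_le _ _ _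
      have k1 := (key m).trans hMle
      have k2 : |⟪x (φ n), w⟫ - ⟪x (φ n), v⟫| ≤ η/3 := by
        rw [abs_sub_comm]; exact (key n).trans hMle
      linarith
    exact cauchySeq_tendsto_of_complete hcauchy
  -- convergence for every v via orthogonal projection
  have hall : ∀ v : H, ∃ L, Tendsto (fun k => ⟪x (φ k), v⟫) atTop (nhds L) := by
    intro v
    obtain ⟨L, hL⟩ := hScv (S.orthogonalProjectionOnto v) (S.orthogonalProjectionOnto v).2
    refine ⟨L, ?_⟩
    have horth : ∀ k, ⟪x (φ k), v⟫ = ⟪x (φ k), (S.orthogonalProjectionOnto v : H)⟫ := by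
      intro k
      have hmem := Submodule.sub_starProjection_mem_orthogonal (K := S) v
      have h0 : ⟪x (φ k), v - (S.orthogonalProjectionOnto v : H)⟫ = 0 :=
        (S.mem_orthogonal _).mp hmem _ (hxS (φ k))
      have := inner_sub_right (𝕜 := ℝ) (x (φ k)) v (S.orthogonalProjectionOnto v : H)
      rw [h0] at this
      linarith [this]
    simpa only [horth] using hL
  choose f hf using hall
  -- f is linear and bounded
  have hadd : ∀ u v, f (u + v) = f u + f v := by
    intro u v
    refine tendsto_nhds_unique (hf (u+v)) ?_
    simpa [inner_add_right] using (hf u).add (hf v)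
  have hsmul : ∀ (r : ℝ) v, f (r • v) = r * f v := by
    intro r v
    refine tendsto_nhds_unique (hf (r • v)) ?_
    simpa [real_inner_smul_right] using (hf v).const_mul r
  have hbd : ∀ v, ‖f v‖ ≤ M * ‖v‖ := by
    intro v
    have : Tendsto (fun k => |⟪x (φ k), v⟫|) atTop (nhds |f v|) := (hf v).abs
    refine le_of_tendsto this (Eventually.of_forall fun k => ?_)
    exact (abs_real_inner_le_norm _ _).trans (mul_le_mul_of_nonneg_right (hM _) (norm_nonneg _))
  let Flin : H →ₗ[ℝ] ℝ :=
    { toFun := f, map_add' := hadd, map_smul' := hsmul }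
  let F : H →L[ℝ] ℝ := LinearMap.mkContinuous Flin M hbd
  refine ⟨(InnerProductSpace.toDual ℝ H).symm F, φ, hφ, fun v => ?_⟩
  have : ⟪(InnerProductSpace.toDual ℝ H).symm F, v⟫ = F v := by
    rw [← InnerProductSpace.toDual_apply_apply]
    simp
  rw [this]
  exact hf v

lemma xu_aux (a b β : ℕ → ℝ) (N : ℕ) (η : ℝ) (hη : 0 < η)
    (ha : ∀ n, 0 ≤ a n)
    (hβ : ∀ n, N ≤ n → 0 ≤ β n ∧ β n ≤ 1)
    (hdiv : Tendsto (fun n => ∑ k ∈ Finset.Ico N n, β k) atTop atTop)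
    (hrec : ∀ n, N ≤ n → a (n+1) ≤ (1 - β n) * a n + β n * b n)
    (hb : ∀ n, N ≤ n → b n ≤ η) :
    ∀ᶠ n in atTop, a n < 2*η := by
  set e : ℕ → ℝ := fun n => max (a n - η) 0 with he
  have hstep : ∀ n, N ≤ n → e (n+1) ≤ (1 - β n) * e n := by
    intro n hn
    have h0 := (hβ n hn).1
    have h1 := (hβ n hn).2
    have h2 : a (n+1) - η ≤ (1 - β n) * (a n - η) := by
      have := hrec n hn; have := hb n hn; nlinarith
    have h3 : (1 - β n) * (a n - η) ≤ (1 - β n) * e n :=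
      mul_le_mul_of_nonneg_left (le_max_left _ _) (by linarith)
    have h4 : (0:ℝ) ≤ (1 - β n) * e n := mul_nonneg (by linarith) (le_max_right _ _)
    exact max_le (by linarith) h4
  have hprod : ∀ n, N ≤ n → e n ≤ e N * Real.exp (-(∑ k ∈ Finset.Ico N n, β k)) := by
    intro n hn
    induction n, hn using Nat.le_induction with
    | base => simp
    | succ n hn ih =>
      have hsum : ∑ k ∈ Finset.Ico N (n+1), β k = (∑ k ∈ Finset.Ico N n, β k) + β n :=
        Finset.sum_Ico_succ_top hn _
      have h0 := (hβ n hn).1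
      calc e (n+1) ≤ (1 - β n) * e n := hstep n hn
        _ ≤ Real.exp (-(β n)) * e n :=
            mul_le_mul_of_nonneg_right (by linarith [Real.add_one_le_exp (-(β n))]) (le_max_right _ _)
        _ ≤ Real.exp (-(β n)) * (e N * Real.exp (-(∑ k ∈ Finset.Ico N n, β k))) :=
            mul_le_mul_of_nonneg_left ih (Real.exp_nonneg _)
        _ = e N * Real.exp (-(∑ k ∈ Finset.Ico N (n+1), β k)) := by
            rw [hsum, neg_add, Real.exp_add]; ring
  have htend : Tendsto (fun n => e N * Real.exp (-(∑ k ∈ Finset.Ico N n, β k))) atTop (nhds 0) := by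
    have h1 : Tendsto (fun n => -(∑ k ∈ Finset.Ico N n, β k)) atTop atBot :=
      tendsto_neg_atBot_iff.mpr hdiv
    have h2 := Real.tendsto_exp_atBot.comp h1
    have := h2.const_mul (e N)
    simpa using this
  have hev : ∀ᶠ n in atTop, e N * Real.exp (-(∑ k ∈ Finset.Ico N n, β k)) < η :=
    htend.eventually (eventually_lt_nhds hη)
  filter_upwards [hev, eventually_ge_atTop N] with n h1 h2
  have := (hprod n h2).trans_lt h1
  have : a n - η < η := lt_of_le_of_lt (le_max_left _ _) this
  linarith

lemma xu (a b β : ℕ → ℝ) (N₀ : ℕ)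
    (ha : ∀ n, 0 ≤ a n)
    (hβ : ∀ n, N₀ ≤ n → 0 ≤ β n ∧ β n ≤ 1)
    (hdiv : ∀ N, Tendsto (fun n => ∑ k ∈ Finset.Ico N n, β k) atTop atTop)
    (hrec : ∀ n, N₀ ≤ n → a (n+1) ≤ (1 - β n) * a n + β n * b n)
    (hb : ∀ η, 0 < η → ∀ᶠ n in atTop, b n ≤ η) :
    Tendsto a atTop (nhds 0) := by
  rw [NormedAddCommGroup.tendsto_nhds_zero]
  intro η hη
  obtain ⟨N₁, hN₁⟩ := eventually_atTop.mp (hb (η/4) (by positivity))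
  set N := max N₀ N₁ with hN
  have := xu_aux a b β N (η/4) (by positivity) ha
    (fun n hn => hβ n ((le_max_left _ _).trans hn)) (hdiv N)
    (fun n hn => hrec n ((le_max_left _ _).trans hn))
    (fun n hn => hN₁ n ((le_max_right _ _).trans hn))
  filter_upwards [this] with n hn
  rw [Real.norm_eq_abs, abs_of_nonneg (ha n)]
  linarith

lemma mainge (a b β : ℕ → ℝ) (C : ℝ)
    (ha : ∀ n, 0 ≤ a n) (hbbd : ∀ n, |b n| ≤ C)
    (hβ : ∀ n, 1 ≤ n → 0 < β n ∧ β n < 1)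
    (hβ0 : Tendsto β atTop (nhds 0))
    (hdiv : ∀ N, Tendsto (fun n => ∑ k ∈ Finset.Ico N n, β k) atTop atTop)
    (hrec : ∀ n, 1 ≤ n → a (n+1) ≤ (1 - β n) * a n + β n * b n)
    (hcrit : ∀ ψ : ℕ → ℕ, Monotone ψ → Tendsto ψ atTop atTop → (∀ n, 1 ≤ ψ n) →
      (∀ η, 0 < η → ∀ᶠ n in atTop, a (ψ n) - a (ψ n + 1) < η) →
      ∀ η, 0 < η → ∀ᶠ n in atTop, b (ψ n) < η) :
    Tendsto a atTop (nhds 0) := by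
  by_cases hc : ∃ N, ∀ n, N ≤ n → a (n+1) ≤ a n
  · -- Case 1 : eventually nonincreasing
    obtain ⟨N, hN⟩ := hc
    have hanti : Antitone (fun k => a (N + k)) := by
      apply antitone_nat_of_succ_le
      intro k
      exact hN (N + k) (Nat.le_add_right _ _)
    have hbdd : BddBelow (Set.range (fun k => a (N + k))) :=
      ⟨0, fun y ⟨k, hk⟩ => hk ▸ ha _⟩
    have hconv' : Tendsto (fun k => a (N + k)) atTop (nhds (⨅ k, a (N + k))) :=
      tendsto_atTop_ciInf hanti hbdd
    obtain ⟨ℓ, hconv⟩ : ∃ ℓ, Tendsto a atTop (nhds ℓ) := by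
      rw [show (fun k => a (N + k)) = (fun k => a (k + N)) from funext fun k => by
        rw [Nat.add_comm]] at hconv'
      exact ⟨_, (tendsto_add_atTop_iff_nat N).mp hconv'⟩
    have hdiff : Tendsto (fun n => a n - a (n+1)) atTop (nhds 0) := by
      have h2 := (tendsto_add_atTop_iff_nat 1).mpr hconv
      have := hconv.sub h2
      simpa using this
    have hsmall : ∀ η, 0 < η → ∀ᶠ n in atTop, a (n+1) - a (n+1+1) < η := by
      intro η hη
      have := hdiff.eventually (eventually_lt_nhds hη)
      obtain ⟨M, hM⟩ := eventually_atTop.mp this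
      exact eventually_atTop.mpr ⟨M, fun n hn => hM (n+1) (hn.trans (Nat.le_succ n))⟩
    have hmono1 : Monotone (fun n : ℕ => n + 1) := fun _ _ h => Nat.succ_le_succ h
    have htend1 : Tendsto (fun n : ℕ => n + 1) atTop atTop := tendsto_add_atTop_nat 1
    have hge1 : ∀ n : ℕ, 1 ≤ n + 1 := fun n => Nat.le_add_left 1 n
    have hbs := hcrit (fun n => n + 1) hmono1 htend1 hge1 hsmall
    have hb' : ∀ η, 0 < η → ∀ᶠ n in atTop, b n ≤ η := by
      intro η hη
      obtain ⟨M, hM⟩ := eventually_atTop.mp (hbs η hη)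
      refine eventually_atTop.mpr ⟨M + 1, fun n hn => ?_⟩
      have h3 : b (n - 1 + 1) < η := hM (n - 1) (by omega)
      have hn1 : n - 1 + 1 = n := by omega
      rw [hn1] at h3
      exact h3.le
    exact xu a b β 1 ha (fun n hn => ⟨(hβ n hn).1.le, (hβ n hn).2.le⟩) hdiv hrec hb'
  · -- Case 2 : Maingé's trick
    have hc2 : ∀ N, ∃ n, N ≤ n ∧ a n < a (n+1) := by
      intro N
      by_contra hcon
      push_neg at hcon
      exact hc ⟨N, hcon⟩
    classical
    set P : ℕ → Prop := fun k => 1 ≤ k ∧ a k < a (k+1) with hP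
    have hc' : ∀ N, ∃ n, N ≤ n ∧ P n := by
      intro N
      obtain ⟨n, hn1, hn2⟩ := hc2 (max N 1)
      exact ⟨n, le_trans (le_max_left _ _) hn1,
        ⟨le_trans (le_max_right _ _) hn1, hn2⟩⟩
    obtain ⟨N₀, hN₀ge, hN₀P⟩ := hc' 1
    set ψ : ℕ → ℕ := fun n => Nat.findGreatest P (N₀ + n) with hψdef
    have hψP : ∀ n, P (ψ n) := fun n =>
      Nat.findGreatest_spec (Nat.le_add_right _ _) hN₀P
    have hψ1 : ∀ n, 1 ≤ ψ n := fun n => (hψP n).1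
    have hψle : ∀ n, ψ n ≤ N₀ + n := fun n => Nat.findGreatest_le _
    have hψmono : Monotone ψ := by
      intro m n hmn
      have h1 : ψ m ≤ N₀ + n := (hψle m).trans (Nat.add_le_add_left hmn _)
      exact Nat.le_findGreatest h1 (hψP m)
    have hψtends : Tendsto ψ atTop atTop := by
      rw [tendsto_atTop]
      intro K
      obtain ⟨m, hm1, hm2⟩ := hc' K
      refine eventually_atTop.mpr ⟨m, fun n hn => ?_⟩
      calc K ≤ m := hm1
        _ ≤ ψ n := Nat.le_findGreatest (by omega) hm2
    have hkey : ∀ n, a (ψ n) < a (ψ n + 1) := fun n => (hψP n).2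
    -- for indices between ψ n and N₀ + n the sequence is non-increasing
    have hbound : ∀ n, a (N₀ + n) ≤ a (ψ n + 1) := by
      intro n
      rcases eq_or_lt_of_le (hψle n) with heq | hlt
      · rw [heq]; exact (heq ▸ hkey n).le
      · have aux : ∀ m, ψ n + 1 ≤ m → m ≤ N₀ + n → a m ≤ a (ψ n + 1) := by
          intro m hm1
          induction m, hm1 using Nat.le_induction with
          | base => intro _; exact le_refl _
          | succ m hm ih =>
            intro hm2
            have hlt : Nat.findGreatest P (N₀ + n) < m := hm
            have hnP : ¬ P m := Nat.findGreatest_is_greatest hlt (by omega)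
            have h1m : 1 ≤ m := le_trans (Nat.le_add_left 1 (ψ n)) hm
            have hmono' : ¬ a m < a (m+1) := fun h => hnP ⟨h1m, h⟩
            exact le_trans (not_lt.mp hmono') (ih (by omega))
        exact aux _ hlt le_rfl
    -- a (ψ n) < b (ψ n)
    have hab : ∀ n, a (ψ n) < b (ψ n) := by
      intro n
      have h1 := hrec (ψ n) (hψ1 n)
      have h2 := hkey n
      have h3 := (hβ (ψ n) (hψ1 n)).1
      nlinarith
    have hcr := hcrit ψ hψmono hψtends hψ1 (fun η hη =>
      Eventually.of_forall (fun n => by linarith [hkey n]))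
    -- a ∘ ψ → 0
    have haψ : Tendsto (fun n => a (ψ n)) atTop (nhds 0) := by
      rw [NormedAddCommGroup.tendsto_nhds_zero]
      intro η hη
      filter_upwards [hcr η hη] with n hn
      rw [Real.norm_eq_abs, abs_of_nonneg (ha _)]
      linarith [hab n]
    -- a (ψ n + 1) → 0
    have haψ1 : Tendsto (fun n => a (ψ n + 1)) atTop (nhds 0) := by
      have hβψ : Tendsto (fun n => β (ψ n)) atTop (nhds 0) := hβ0.comp hψtends
      have hg : Tendsto (fun n => a (ψ n) + β (ψ n) * C) atTop (nhds 0) := by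
        have := haψ.add (hβψ.mul_const C)
        simpa using this
      apply squeeze_zero (fun n => ha _) _ hg
      intro n
      have h1 := hrec (ψ n) (hψ1 n)
      have h3 := (hβ (ψ n) (hψ1 n)).1
      have h4 := (hβ (ψ n) (hψ1 n)).2
      have h5 := hbbd (ψ n)
      have h6 := ha (ψ n)
      have h7 := abs_le.mp h5
      nlinarith
    -- squeeze for the full sequence
    rw [NormedAddCommGroup.tendsto_nhds_zero]
    intro η hη
    have := haψ1.eventually (eventually_lt_nhds hη)
    obtain ⟨M, hM⟩ := eventually_atTop.mp this
    refine eventually_atTop.mpr ⟨N₀ + M, fun n hn => ?_⟩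
    rw [Real.norm_eq_abs, abs_of_nonneg (ha _)]
    have h1 := hbound (n - N₀)
    have h2 : N₀ + (n - N₀) = n := by omega
    rw [h2] at h1
    have h3 := hM (n - N₀) (by omega)
    linarith

theorem stmt_15 {H : Type*} [NormedAddCommGroup H] [InnerProductSpace ℝ H] [CompleteSpace H]
    (A : H → Set H)
    (hA : ∀ x y u v, u ∈ A x → v ∈ A y → 0 ≤ ⟪u - v, x - y⟫)
    (γ : ℝ) (hγ : 0 < γ)
    (B : H → H) (hB : ∀ x y : H, γ * ‖B x - B y‖ ^ 2 ≤ ⟪B x - B y, x - y⟫)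
    (hΩ : ∃ x : H, -B x ∈ A x)
    (hclosed : ∀ (y u : ℕ → H) (ybar : H),
      (∀ v : H, Tendsto (fun k => ⟪y k, v⟫) atTop (nhds ⟪ybar, v⟫)) →
      (∀ k, ∃ a ∈ A (y k), u k = a + B (y k)) →
      Tendsto (fun k => ‖u k‖) atTop (nhds 0) →
      -B ybar ∈ A ybar)
    (ε : ℝ) (hε : 0 < ε)
    (τ α β : ℕ → ℝ)
    (hτ : ∀ n, 1 ≤ n → τ n ∈ Set.Ioo ε (2 * γ - ε))
    (J : ℕ → H → H)
    (hJ : ∀ n, 1 ≤ n → ∀ y : H, (1 / τ n) • (y - J n y) ∈ A (J n y))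
    (hα : ∀ n, 1 ≤ n → α n ∈ Set.Ioo (0 : ℝ) 1)
    (hβ : ∀ n, 1 ≤ n → β n ∈ Set.Ioo (0 : ℝ) 1)
    (hαβ : ∀ n, 1 ≤ n → α n + β n ≤ 1)
    (hαliminf : 0 < liminf (fun n => α n) atTop)
    (hαlimsup : limsup (fun n => α n) atTop < 1)
    (hβ0 : Tendsto β atTop (nhds 0))
    (hβsum : ¬ Summable β)
    (x : ℕ → H)
    (hx : ∀ n, 1 ≤ n →
      x (n + 1) = (1 - α n - β n) • x n + α n • J n (x n - τ n • B (x n))) :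
    ∃ z : H, -B z ∈ A z ∧ (∀ q : H, -B q ∈ A q → ⟪-z, q - z⟫ ≤ 0) ∧
      Tendsto x atTop (nhds z) := by
  classical
  have h2γ : (0:ℝ) < 2*γ := by linarith
  have hτpos : ∀ n, 1 ≤ n → 0 < τ n := fun n hn => hε.trans (hτ n hn).1
  have hτub : ∀ n, 1 ≤ n → τ n ≤ 2*γ - ε := fun n hn => (hτ n hn).2.le
  set c : ℝ := ε / (2*γ) with hcdef
  have hcpos : 0 < c := by rw [hcdef]; positivity
  have hcmul : c * (2*γ) = ε := div_mul_cancel₀ _ (ne_of_gt h2γ)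
  -- Lipschitz property of B
  have hBlip : ∀ p q : H, ‖B p - B q‖ ≤ (1/γ) * ‖p - q‖ := by
    intro p q
    rcases eq_or_lt_of_le (norm_nonneg (B p - B q)) with h0 | h0
    · rw [← h0]; positivity
    · have h1 := hB p q
      have h2 := real_inner_le_norm (B p - B q) (p - q)
      have h3 : γ * ‖B p - B q‖ ≤ ‖p - q‖ := by nlinarith
      calc ‖B p - B q‖ = (1/γ) * (γ * ‖B p - B q‖) := by field_simp
        _ ≤ (1/γ) * ‖p - q‖ := mul_le_mul_of_nonneg_left h3 (by positivity)
  -- smul identity helper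
  have hsmulid : ∀ n, 1 ≤ n → ∀ p w : H,
      (1 / τ n) • ((p - τ n • B p) - w) = (1 / τ n) • (p - w) - B p := by
    intro n hn p w
    have hτne : τ n ≠ 0 := ne_of_gt (hτpos n hn)
    have h1 : (1 / τ n) • (τ n • B p) = B p := by
      rw [smul_smul, one_div_mul_cancel hτne, one_smul]
    calc (1 / τ n) • ((p - τ n • B p) - w)
        = (1 / τ n) • ((p - w) - τ n • B p) := by congr 1; abel
      _ = (1 / τ n) • (p - w) - (1 / τ n) • (τ n • B p) := by rw [smul_sub]
      _ = (1 / τ n) • (p - w) - B p := by rw [h1]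
  -- firm nonexpansiveness of the resolvents
  have hfirm : ∀ n, 1 ≤ n → ∀ u v : H,
      ‖J n u - J n v‖^2 ≤ ⟪u - v, J n u - J n v⟫ := by
    intro n hn u v
    have h := hA (J n u) (J n v) _ _ (hJ n hn u) (hJ n hn v)
    have hτn := hτpos n hn
    have he : (1 / τ n) • (u - J n u) - (1 / τ n) • (v - J n v)
        = (1 / τ n) • ((u - v) - (J n u - J n v)) := by
      rw [← smul_sub]; congr 1; abel
    rw [he, real_inner_smul_left] at h
    have h2 : 0 ≤ ⟪(u - v) - (J n u - J n v), J n u - J n v⟫ :=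
      (mul_nonneg_iff_of_pos_left (one_div_pos.mpr hτn)).mp h
    rw [inner_sub_left, real_inner_self_eq_norm_sq] at h2
    linarith
  -- key two-point inequality for the forward-backward map
  have hkey2 : ∀ n, 1 ≤ n → ∀ p q : H,
      2*γ*‖J n (p - τ n • B p) - J n (q - τ n • B q)‖^2
        + (2*γ - τ n)*‖(p - q) - (J n (p - τ n • B p) - J n (q - τ n • B q))‖^2
        ≤ 2*γ*‖p - q‖^2 := by
    intro n hn p q
    have hτn := hτpos n hn
    set u : H := J n (p - τ n • B p) with hudef
    set w : H := J n (q - τ n • B q) with hwdef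
    have hfm := hfirm n hn (p - τ n • B p) (q - τ n • B q)
    have hsplit : (p - τ n • B p) - (q - τ n • B q) = (p - q) - τ n • (B p - B q) := by
      rw [smul_sub]; abel
    rw [hsplit, inner_sub_left, real_inner_smul_left] at hfm
    have hpar := norm_sub_sq_real (p - q) (u - w)
    have hB1 := hB p q
    have hid : u - w = (p - q) - ((p - q) - (u - w)) := by abel
    have hsp2 : ⟪B p - B q, u - w⟫
        = ⟪B p - B q, p - q⟫ - ⟪B p - B q, (p - q) - (u - w)⟫ := by
      conv_lhs => rw [hid]
      rw [inner_sub_right]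
    have hCS := real_inner_le_norm (B p - B q) ((p - q) - (u - w))
    rw [hsp2, mul_sub] at hfm
    have hE : 0 ≤ ‖p - q‖^2 - ‖(p - q) - (u - w)‖^2
        - 2*(τ n)*⟪B p - B q, p - q⟫ + 2*(τ n)*⟪B p - B q, (p - q) - (u - w)⟫
        - ‖u - w‖^2 := by linarith
    nlinarith [mul_nonneg hγ.le hE,
      mul_nonneg (mul_nonneg hγ.le hτn.le) (sub_nonneg.mpr hB1),
      mul_nonneg (mul_nonneg hγ.le hτn.le) (sub_nonneg.mpr hCS),
      mul_nonneg hτn.le (sq_nonneg (2*γ*‖B p - B q‖ - ‖(p - q) - (u - w)‖))]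
  -- the solution set
  set Ω : Set H := {y : H | -B y ∈ A y} with hΩdef
  -- zeros are fixed points of the forward-backward map
  have hfixΩ : ∀ n, 1 ≤ n → ∀ z, z ∈ Ω → J n (z - τ n • B z) = z := by
    intro n hn z hz
    set w : H := J n (z - τ n • B z) with hwdef
    have ha1 := hJ n hn (z - τ n • B z)
    have h := hA w z _ _ ha1 hz
    have he : (1 / τ n) • ((z - τ n • B z) - w) - (-B z) = (1 / τ n) • (z - w) := by
      rw [hsmulid n hn z w]; abel
    rw [he, real_inner_smul_left] at h
    have h2 : 0 ≤ ⟪z - w, w - z⟫ :=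
      (mul_nonneg_iff_of_pos_left (one_div_pos.mpr (hτpos n hn))).mp h
    have h3 : ⟪z - w, w - z⟫ = -‖z - w‖^2 := by
      rw [show w - z = -(z - w) by abel, inner_neg_right, real_inner_self_eq_norm_sq]
    rw [h3] at h2
    have h4 : ‖z - w‖^2 = 0 := le_antisymm (by linarith) (sq_nonneg _)
    have h5 : z - w = 0 := by
      rw [pow_eq_zero_iff (two_ne_zero)] at h4
      exact norm_eq_zero.mp h4
    have : z = w := by rwa [sub_eq_zero] at h5
    exact this.symm
  -- quasi-contraction inequality
  have hquasi : ∀ n, 1 ≤ n → ∀ p z, z ∈ Ω →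
      ‖J n (p - τ n • B p) - z‖^2 + c * ‖p - J n (p - τ n • B p)‖^2 ≤ ‖p - z‖^2 := by
    intro n hn p z hz
    have hk := hkey2 n hn p z
    rw [hfixΩ n hn z hz] at hk
    have hid : (p - z) - (J n (p - τ n • B p) - z) = p - J n (p - τ n • B p) := by abel
    rw [hid] at hk
    have hτu := hτub n hn
    nlinarith [sq_nonneg ‖p - J n (p - τ n • B p)‖, hcmul,
      mul_pos h2γ (by positivity : (0:ℝ) < 1)]
  have hquasin : ∀ n, 1 ≤ n → ∀ p z, z ∈ Ω →
      ‖J n (p - τ n • B p) - z‖ ≤ ‖p - z‖ := by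
    intro n hn p z hz
    have h := hquasi n hn p z hz
    have h1 := mul_nonneg hcpos.le (sq_nonneg ‖p - J n (p - τ n • B p)‖)
    have h2 : ‖J n (p - τ n • B p) - z‖^2 ≤ ‖p - z‖^2 := by linarith
    exact (pow_le_pow_iff_left₀ (norm_nonneg _) (norm_nonneg _) two_ne_zero).mp h2
  -- Ω is convex
  have hconvex : Convex ℝ Ω := by
    intro p hp q hq ap aq hap haq hsum
    set y : H := ap • p + aq • q with hydef
    set Ty : H := J 1 (y - τ 1 • B y) with hTydef
    have hqp : ‖Ty - p‖^2 ≤ ‖y - p‖^2 := by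
      have h := hquasi 1 le_rfl y p hp
      nlinarith [mul_nonneg hcpos.le (sq_nonneg ‖y - Ty‖)]
    have hqq : ‖Ty - q‖^2 ≤ ‖y - q‖^2 := by
      have h := hquasi 1 le_rfl y q hq
      nlinarith [mul_nonneg hcpos.le (sq_nonneg ‖y - Ty‖)]
    have hidp : 2*⟪Ty - y, Ty - p⟫ = ‖Ty - y‖^2 + ‖Ty - p‖^2 - ‖y - p‖^2 := by
      have h := norm_sub_sq_real (Ty - y) (Ty - p)
      have hid2 : (Ty - y) - (Ty - p) = p - y := by abel
      rw [hid2, norm_sub_rev p y] at h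
      linarith
    have hidq : 2*⟪Ty - y, Ty - q⟫ = ‖Ty - y‖^2 + ‖Ty - q‖^2 - ‖y - q‖^2 := by
      have h := norm_sub_sq_real (Ty - y) (Ty - q)
      have hid2 : (Ty - y) - (Ty - q) = q - y := by abel
      rw [hid2, norm_sub_rev q y] at h
      linarith
    have h2p : 2*⟪Ty - y, Ty - p⟫ ≤ ‖Ty - y‖^2 := by linarith
    have h2q : 2*⟪Ty - y, Ty - q⟫ ≤ ‖Ty - y‖^2 := by linarith
    have hco2 : Ty - y = ap • (Ty - p) + aq • (Ty - q) := by
      have h1 : ap • (Ty - p) + aq • (Ty - q) = (ap + aq) • Ty - (ap • p + aq • q) := by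
        module
      rw [h1, hsum, one_smul]
    have hcomb : ‖Ty - y‖^2 = ap*⟪Ty - y, Ty - p⟫ + aq*⟪Ty - y, Ty - q⟫ := by
      calc ‖Ty - y‖^2 = ⟪Ty - y, Ty - y⟫ := (real_inner_self_eq_norm_sq _).symm
        _ = ⟪Ty - y, ap • (Ty - p) + aq • (Ty - q)⟫ := by rw [← hco2]
        _ = ap*⟪Ty - y, Ty - p⟫ + aq*⟪Ty - y, Ty - q⟫ := by
            rw [inner_add_right, real_inner_smul_right, real_inner_smul_right]
    have hmul : ap*‖Ty - y‖^2 + aq*‖Ty - y‖^2 = ‖Ty - y‖^2 := by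
      rw [← add_mul, hsum, one_mul]
    have hz2 : ‖Ty - y‖^2 ≤ 0 := by
      nlinarith [mul_le_mul_of_nonneg_left h2p hap, mul_le_mul_of_nonneg_left h2q haq]
    have h4 : ‖Ty - y‖^2 = 0 := le_antisymm hz2 (sq_nonneg _)
    have h5 : Ty = y := by
      rw [pow_eq_zero_iff (two_ne_zero)] at h4
      rw [← sub_eq_zero]
      exact norm_eq_zero.mp h4
    -- so y is a fixed point, hence y ∈ Ω
    have ha1 := hJ 1 le_rfl (y - τ 1 • B y)
    rw [show J 1 (y - τ 1 • B y) = Ty from rfl, h5] at ha1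
    have he : (1 / τ 1) • ((y - τ 1 • B y) - y) = -B y := by
      rw [hsmulid 1 le_rfl y y, sub_self, smul_zero, zero_sub]
    rw [he] at ha1
    exact ha1
  -- Ω is closed
  have hΩclosed : IsClosed Ω := by
    apply isClosed_of_closure_subset
    intro y hy
    set Ty : H := J 1 (y - τ 1 • B y) with hTydef
    have hTy : ∀ δ, 0 < δ → ‖Ty - y‖ ≤ 2*δ := by
      intro δ hδ
      obtain ⟨q, hqΩ, hqd⟩ := Metric.mem_closure_iff.mp hy δ hδ
      have h1 : ‖Ty - q‖ ≤ ‖y - q‖ := hquasin 1 le_rfl y q hqΩ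
      have h2 : dist Ty y ≤ dist Ty q + dist q y := dist_triangle _ _ _
      rw [dist_eq_norm, dist_eq_norm, dist_eq_norm] at h2
      rw [dist_eq_norm] at hqd
      have h3 : ‖q - y‖ = ‖y - q‖ := norm_sub_rev _ _
      linarith
    have hTy0 : Ty = y := by
      by_contra hne
      have h0 : 0 < ‖Ty - y‖ := by
        rw [norm_pos_iff, sub_ne_zero]; exact hne
      have := hTy (‖Ty - y‖/4) (by linarith)
      linarith
    have ha1 := hJ 1 le_rfl (y - τ 1 • B y)
    rw [show J 1 (y - τ 1 • B y) = Ty from rfl, hTy0] at ha1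
    have he : (1 / τ 1) • ((y - τ 1 • B y) - y) = -B y := by
      rw [hsmulid 1 le_rfl y y, sub_self, smul_zero, zero_sub]
    rw [he] at ha1
    exact ha1
  -- the minimal norm solution
  obtain ⟨z, hzΩ, hzproj⟩ :=
    exists_norm_eq_iInf_of_complete_convex
      (hΩ.imp fun _ h => h) (hΩclosed.isComplete) hconvex 0
  have hzmin : ∀ q, q ∈ Ω → ⟪-z, q - z⟫ ≤ 0 := by
    have h := (norm_eq_iInf_iff_real_inner_le_zero hconvex hzΩ).mp hzproj
    intro q hq
    have := h q hq
    rwa [zero_sub] at this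
  -- the sequences
  set t : ℕ → H := fun n => J n (x n - τ n • B (x n)) with htdef
  have ht_eq : ∀ n, t n = J n (x n - τ n • B (x n)) := fun n => by simp only [htdef]
  set r : ℕ → ℝ := fun n => ‖x n - t n‖ with hrdef
  have hr_eq : ∀ n, r n = ‖x n - t n‖ := fun n => by simp only [hrdef]
  have hr0 : ∀ n, 0 ≤ r n := fun n => by rw [hr_eq]; positivity
  set aa : ℕ → ℝ := fun n => ‖x n - z‖^2 with haadef
  have haa_eq : ∀ n, aa n = ‖x n - z‖^2 := fun n => by simp only [haadef]
  have haa0 : ∀ n, 0 ≤ aa n := fun n => by rw [haa_eq]; positivity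
  set bb : ℕ → ℝ := fun n => 2*⟪-z, x (n+1) - z⟫ with hbbdef
  have hbb_eq : ∀ n, bb n = 2*⟪-z, x (n+1) - z⟫ := fun n => by simp only [hbbdef]
  set Mx : ℝ := max ‖x 1 - z‖ ‖z‖ with hMxdef
  have hMx0 : 0 ≤ Mx := le_trans (norm_nonneg z) (le_max_right _ _)
  -- boundedness
  have hxbound : ∀ n, 1 ≤ n → ‖x n - z‖ ≤ Mx := by
    intro n hn
    induction n, hn using Nat.le_induction with
    | base => exact le_max_left _ _
    | succ n hn ih =>
      have hα' := hα n hn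
      have hβ' := hβ n hn
      have hαβ' := hαβ n hn
      have hp0 : (0:ℝ) ≤ 1 - α n - β n := by linarith
      have hco : x (n+1) - z = ((1 - α n - β n) • (x n - z) + α n • (t n - z)) - β n • z := by
        rw [hx n hn, ← ht_eq n]; module
      have hq1 : ‖t n - z‖ ≤ ‖x n - z‖ := by
        rw [ht_eq n]; exact hquasin n hn (x n) z hzΩ
      have hzM : ‖z‖ ≤ Mx := le_max_right _ _
      calc ‖x (n+1) - z‖
          ≤ ‖(1 - α n - β n) • (x n - z) + α n • (t n - z)‖ + ‖β n • z‖ := by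
            rw [hco]; exact norm_sub_le _ _
        _ ≤ ‖(1 - α n - β n) • (x n - z)‖ + ‖α n • (t n - z)‖ + ‖β n • z‖ := by
            linarith [norm_add_le ((1 - α n - β n) • (x n - z)) (α n • (t n - z))]
        _ = (1 - α n - β n) * ‖x n - z‖ + α n * ‖t n - z‖ + β n * ‖z‖ := by
            rw [norm_smul_of_nonneg hp0, norm_smul_of_nonneg hα'.1.le,
              norm_smul_of_nonneg hβ'.1.le]
        _ ≤ Mx := by nlinarith [mul_le_mul_of_nonneg_left hq1 hα'.1.le,
            mul_le_mul_of_nonneg_left ih hp0, mul_le_mul_of_nonneg_left ih hα'.1.le,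
            mul_le_mul_of_nonneg_left hzM hβ'.1.le]
  have hxnorm : ∀ n, 1 ≤ n → ‖x n‖ ≤ Mx + ‖z‖ := by
    intro n hn
    have h1 := hxbound n hn
    have h2 : x n = (x n - z) + z := by abel
    calc ‖x n‖ = ‖(x n - z) + z‖ := by rw [← h2]
      _ ≤ ‖x n - z‖ + ‖z‖ := norm_add_le _ _
      _ ≤ Mx + ‖z‖ := by linarith
  set CC : ℝ := 2*‖z‖*Mx with hCCdef
  have hCC0 : 0 ≤ CC := by
    rw [hCCdef]; positivity
  have hbbb : ∀ n, |bb n| ≤ CC := by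
    intro n
    have h1 : ‖x (n+1) - z‖ ≤ Mx := hxbound (n+1) (Nat.le_add_left 1 n)
    have h2 : |⟪-z, x (n+1) - z⟫| ≤ ‖z‖ * ‖x (n+1) - z‖ := by
      have := abs_real_inner_le_norm (-z) (x (n+1) - z)
      rwa [norm_neg] at this
    rw [hbb_eq, abs_mul, abs_of_nonneg (by norm_num : (0:ℝ) ≤ 2), hCCdef]
    nlinarith [norm_nonneg z]
  -- the main recursion
  have hR2 : ∀ n, 1 ≤ n →
      aa (n+1) ≤ (1 - β n)*aa n - ((1-β n)*(α n)*c)*(r n)^2 + β n * bb n := by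
    intro n hn
    have hα' := hα n hn
    have hβ' := hβ n hn
    have hαβ' := hαβ n hn
    have hp0 : (0:ℝ) ≤ 1 - α n - β n := by linarith
    have hq0 : (0:ℝ) ≤ α n := hα'.1.le
    have hb0 : (0:ℝ) ≤ β n := hβ'.1.le
    have h1β : (0:ℝ) ≤ 1 - β n := by linarith
    have hco : x (n+1) - z = ((1 - α n - β n) • (x n - z) + α n • (t n - z)) + (-(β n • z)) := by
      rw [hx n hn, ← ht_eq n]; module
    -- step 1
    have h1 : aa (n+1) ≤ ‖(1 - α n - β n) • (x n - z) + α n • (t n - z)‖^2 + β n * bb n := by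
      set A0 : H := (1 - α n - β n) • (x n - z) + α n • (t n - z) with hA0def
      set e0 : H := -(β n • z) with he0def
      have hsq := norm_add_sq_real A0 e0
      have hadd := inner_add_right (𝕜 := ℝ) e0 A0 e0
      have hself : ⟪e0, e0⟫ = ‖e0‖^2 := real_inner_self_eq_norm_sq e0
      have hcm : ⟪A0, e0⟫ = ⟪e0, A0⟫ := real_inner_comm _ _
      have hx1 : ⟪e0, x (n+1) - z⟫ = ⟪e0, A0 + e0⟫ := by rw [hco]
      have hbeq : 2*⟪e0, x (n+1) - z⟫ = β n * bb n := by
        rw [hbb_eq, he0def, ← smul_neg, real_inner_smul_left]; ring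
      have haan : aa (n+1) = ‖A0 + e0‖^2 := by rw [haa_eq, hco]
      nlinarith [sq_nonneg ‖e0‖]
    -- step 2 : convexity bound for the first part
    have h2 : ‖(1 - α n - β n) • (x n - z) + α n • (t n - z)‖^2
        ≤ (1 - β n) * ((1 - α n - β n) * ‖x n - z‖^2 + α n * ‖t n - z‖^2) := by
      have hsq := norm_add_sq_real ((1 - α n - β n) • (x n - z)) (α n • (t n - z))
      rw [norm_smul_of_nonneg hp0, norm_smul_of_nonneg hq0,
        real_inner_smul_left, real_inner_smul_right] at hsq
      have hCS := real_inner_le_norm (x n - z) (t n - z)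
      nlinarith [mul_nonneg hp0 hq0, sq_nonneg (‖x n - z‖ - ‖t n - z‖),
        mul_nonneg (mul_nonneg hp0 hq0) (sq_nonneg (‖x n - z‖ - ‖t n - z‖))]
    -- step 3
    have h3 : ‖t n - z‖^2 ≤ ‖x n - z‖^2 - c * (r n)^2 := by
      have h := hquasi n hn (x n) z hzΩ
      rw [← ht_eq n] at h
      rw [hr_eq]
      linarith
    have hv0 : (0:ℝ) ≤ ‖x n - z‖^2 := sq_nonneg _
    have haaeqn : aa n = ‖x n - z‖^2 := haa_eq n
    nlinarith [h1, h2, h3, mul_le_mul_of_nonneg_left h3 (mul_nonneg h1β hq0),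
      mul_nonneg (mul_nonneg h1β hb0) hv0]
  -- divergence of the β sums
  have hβnn : ∀ k, 1 ≤ k → 0 ≤ β k := fun k hk => (hβ k hk).1.le
  have hdiv : ∀ N, Tendsto (fun n => ∑ k ∈ Finset.Ico N n, β k) atTop atTop := by
    intro N
    have h1 : ¬ Summable (fun i => β (i + (N+1))) :=
      fun h => hβsum ((summable_nat_add_iff (N+1)).mp h)
    have h2 : ∀ i, 0 ≤ β (i + (N+1)) := fun i => hβnn _ (by omega)
    have h3 := (not_summable_iff_tendsto_nat_atTop_of_nonneg h2).mp h1
    have h4 : Tendsto (fun n => ∑ k ∈ Finset.Ico (N+1) n, β k) atTop atTop := by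
      have h5 : Tendsto (fun n => ∑ i ∈ Finset.range (n - (N+1)), β (i + (N+1))) atTop atTop :=
        h3.comp (tendsto_sub_atTop_nat (N+1))
      apply h5.congr
      intro n
      rw [Finset.sum_Ico_eq_sum_range]
      exact Finset.sum_congr rfl fun i _ => by rw [Nat.add_comm]
    have h6 : Tendsto (fun n => β N + ∑ k ∈ Finset.Ico (N+1) n, β k) atTop atTop :=
      tendsto_atTop_add_const_left _ _ h4
    refine Tendsto.congr' ?_ h6
    filter_upwards [eventually_ge_atTop (N+1)] with n hn
    exact (Finset.sum_eq_sum_Ico_succ_bot (by omega : N < n) β).symm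
  -- liminf of α
  have hαliminf' : (0:ℝ) < liminf α atTop := hαliminf
  set α₀ : ℝ := liminf α atTop / 2 with hα₀def
  have hα₀pos : 0 < α₀ := by rw [hα₀def]; linarith
  have hbddα : IsBoundedUnder (· ≥ ·) atTop α := by
    refine ⟨0, ?_⟩
    rw [eventually_map]
    filter_upwards [eventually_ge_atTop 1] with n hn
    exact (hα n hn).1.le
  have hαev : ∀ᶠ n in atTop, α₀ < α n :=
    eventually_lt_of_lt_liminf (by rw [hα₀def]; linarith) hbddα
  -- the crucial subsequence criterion
  have hcrit : ∀ ψ : ℕ → ℕ, Monotone ψ → Tendsto ψ atTop atTop → (∀ n, 1 ≤ ψ n) →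
      (∀ η, 0 < η → ∀ᶠ n in atTop, aa (ψ n) - aa (ψ n + 1) < η) →
      ∀ η, 0 < η → ∀ᶠ n in atTop, bb (ψ n) < η := by
    intro ψ hψm hψt hψ1 hdec η hη
    -- r ∘ ψ → 0
    have hrψsq : Tendsto (fun n => (r (ψ n))^2) atTop (nhds 0) := by
      rw [NormedAddCommGroup.tendsto_nhds_zero]
      intro η' hη'
      have hq1 : (0:ℝ) < α₀ * c * η' / 8 := by positivity
      have hq2 : (0:ℝ) < α₀ * c * η' / (8*(CC+1)) := by positivity
      have hβψ : Tendsto (fun n => β (ψ n)) atTop (nhds 0) := hβ0.comp hψt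
      filter_upwards [hdec _ hq1, hβψ.eventually (eventually_lt_nhds hq2),
        hψt.eventually hαev,
        hβψ.eventually (eventually_lt_nhds one_half_pos)] with n h1 h2 h3 h4
      have hn1 := hψ1 n
      have hrec := hR2 (ψ n) hn1
      have hβpos := (hβ (ψ n) hn1).1
      have hβlt := (hβ (ψ n) hn1).2
      have hαub := (hα (ψ n) hn1).2
      have haaψ : 0 ≤ aa (ψ n) := haa0 _
      have hbub : bb (ψ n) ≤ CC := le_trans (le_abs_self _) (hbbb (ψ n))
      have hrnn := hr0 (ψ n)
      have hs : ((1 - β (ψ n))*(α (ψ n))*c)*(r (ψ n))^2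
          ≤ α₀ * c * η' / 8 + (α₀ * c * η' / (8*(CC+1))) * CC := by
        have hβle : β (ψ n) * bb (ψ n) ≤ β (ψ n) * CC :=
          mul_le_mul_of_nonneg_left hbub hβpos.le
        have haux : β (ψ n) * CC ≤ (α₀ * c * η' / (8*(CC+1))) * CC :=
          mul_le_mul_of_nonneg_right h2.le hCC0
        nlinarith [mul_nonneg hβpos.le haaψ]
      have hcoef : α₀ * c / 2 ≤ (1 - β (ψ n))*(α (ψ n))*c := by
        have hh1 : α₀ * (1/2) ≤ (α (ψ n)) * (1 - β (ψ n)) :=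
          mul_le_mul h3.le (by linarith) (by norm_num) (by linarith [hα₀pos])
        calc α₀ * c / 2 = (α₀ * (1/2)) * c := by ring
          _ ≤ ((α (ψ n)) * (1 - β (ψ n))) * c := mul_le_mul_of_nonneg_right hh1 hcpos.le
          _ = (1 - β (ψ n))*(α (ψ n))*c := by ring
      have h6 : (α₀ * c * η' / (8*(CC+1))) * CC ≤ α₀ * c * η' / 8 := by
        rw [div_mul_eq_mul_div, div_le_div_iff₀ (by positivity) (by positivity)]
        nlinarith [hα₀pos, hcpos, hη'.le]
      have h5 : (α₀ * c / 2) * (r (ψ n))^2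
          ≤ α₀ * c * η' / 8 + (α₀ * c * η' / (8*(CC+1))) * CC :=
        le_trans (mul_le_mul_of_nonneg_right hcoef (sq_nonneg _)) hs
      rw [Real.norm_eq_abs, abs_of_nonneg (sq_nonneg _)]
      nlinarith [mul_pos hα₀pos hcpos]
    have hrψ : Tendsto (fun n => r (ψ n)) atTop (nhds 0) := by
      have h := hrψsq.sqrt
      rw [Real.sqrt_zero] at h
      apply h.congr
      intro n
      exact Real.sqrt_sq (hr0 _)
    by_contra hcon
    have hfreq : ∃ᶠ n in atTop, η ≤ bb (ψ n) :=
      (Filter.not_eventually.mp hcon).mono fun n h => not_lt.mp h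
    obtain ⟨θ, hθm, hθp⟩ := extraction_of_frequently_atTop hfreq
    have hxK : ∀ k, ‖x (ψ (θ k))‖ ≤ Mx + ‖z‖ := fun k => hxnorm _ (hψ1 _)
    obtain ⟨wbar, φ₂, hφ₂m, hweak⟩ := exists_weak_subseq (fun k => x (ψ (θ k))) (Mx + ‖z‖) hxK
    set m : ℕ → ℕ := fun k => ψ (θ (φ₂ k)) with hmdef
    have hm1 : ∀ k, 1 ≤ m k := fun k => hψ1 _
    have hθφ : StrictMono (θ ∘ φ₂) := hθm.comp hφ₂m
    have hmt : Tendsto m atTop atTop := hψt.comp hθφ.tendsto_atTop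
    have hrm : Tendsto (fun k => r (m k)) atTop (nhds 0) := hrψ.comp hθφ.tendsto_atTop
    have hwx : ∀ v : H, Tendsto (fun k => ⟪x (m k), v⟫) atTop (nhds ⟪wbar, v⟫) :=
      fun v => hweak v
    have hwΩ : -B wbar ∈ A wbar := by
      set yk : ℕ → H := fun k => t (m k) with hykdef
      set uk : ℕ → H := fun k =>
        (1 / τ (m k)) • (x (m k) - t (m k)) - B (x (m k)) + B (t (m k)) with hukdef
      have hyk_eq : ∀ k, yk k = t (m k) := fun k => by simp only [hykdef]
      have huk_eq : ∀ k, uk k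
          = (1 / τ (m k)) • (x (m k) - t (m k)) - B (x (m k)) + B (t (m k)) :=
        fun k => by simp only [hukdef]
      apply hclosed yk uk wbar
      · intro v
        have h2 : Tendsto (fun k => ⟪t (m k) - x (m k), v⟫) atTop (nhds 0) := by
          apply squeeze_zero_norm (a := fun k => r (m k) * ‖v‖)
          · intro k
            rw [Real.norm_eq_abs]
            calc |⟪t (m k) - x (m k), v⟫| ≤ ‖t (m k) - x (m k)‖ * ‖v‖ :=
                abs_real_inner_le_norm _ _
              _ = r (m k) * ‖v‖ := by
                  rw [hr_eq (m k), norm_sub_rev (t (m k)) (x (m k))]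
          · have h7 := hrm.mul_const ‖v‖
            rwa [zero_mul] at h7
        have h3 := (hwx v).add h2
        rw [add_zero] at h3
        apply h3.congr
        intro k
        rw [hyk_eq k, inner_sub_left]; ring
      · intro k
        refine ⟨(1 / τ (m k)) • ((x (m k) - τ (m k) • B (x (m k))) - t (m k)), ?_, ?_⟩
        · rw [hyk_eq k, ht_eq (m k)]
          exact hJ (m k) (hm1 k) (x (m k) - τ (m k) • B (x (m k)))
        · rw [huk_eq k, hyk_eq k, hsmulid (m k) (hm1 k) (x (m k)) (t (m k))]
      · have hbnd : ∀ k, ‖uk k‖ ≤ (1/ε + 1/γ) * r (m k) := by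
          intro k
          rw [huk_eq k]
          have hτm := hτpos (m k) (hm1 k)
          have h1 : ‖(1 / τ (m k)) • (x (m k) - t (m k))‖ = (1 / τ (m k)) * r (m k) := by
            rw [norm_smul_of_nonneg (one_div_pos.mpr hτm).le, hr_eq]
          have h2 : (1 / τ (m k)) * r (m k) ≤ (1/ε) * r (m k) := by
            apply mul_le_mul_of_nonneg_right _ (hr0 _)
            exact one_div_le_one_div_of_le hε (hτ (m k) (hm1 k)).1.le
          have h3 : ‖B (t (m k)) - B (x (m k))‖ ≤ (1/γ) * r (m k) := by
            have h := hBlip (t (m k)) (x (m k))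
            rw [norm_sub_rev (t (m k)) (x (m k)), ← hr_eq (m k)] at h
            exact h
          calc ‖(1 / τ (m k)) • (x (m k) - t (m k)) - B (x (m k)) + B (t (m k))‖
              = ‖(1 / τ (m k)) • (x (m k) - t (m k)) + (B (t (m k)) - B (x (m k)))‖ := by
                congr 1; abel
            _ ≤ ‖(1 / τ (m k)) • (x (m k) - t (m k))‖ + ‖B (t (m k)) - B (x (m k))‖ :=
                norm_add_le _ _
            _ ≤ (1/ε + 1/γ) * r (m k) := by rw [h1]; nlinarith [hr0 (m k)]
        apply squeeze_zero (fun k => norm_nonneg _) hbnd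
        have h7 := hrm.const_mul (1/ε + 1/γ)
        rwa [mul_zero] at h7
    have hzw := hzmin wbar hwΩ
    have hper : ∀ (yv : H), ⟪yv, -z⟫ - ⟪z, -z⟫ = ⟪-z, yv - z⟫ := by
      intro yv
      rw [inner_sub_right, real_inner_comm yv (-z), real_inner_comm z (-z)]
    have h1 : Tendsto (fun k => ⟪-z, x (m k) - z⟫) atTop (nhds ⟪-z, wbar - z⟫) := by
      have h0 := (hwx (-z)).sub_const ⟪z, -z⟫
      rw [hper wbar] at h0
      apply h0.congr
      intro k
      exact hper _
    have hdstep : ∀ k, ‖x (m k + 1) - x (m k)‖ ≤ r (m k) + β (m k) * (Mx + ‖z‖) := by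
      intro k
      have hn1 := hm1 k
      have hdd : x (m k + 1) - x (m k)
          = α (m k) • (t (m k) - x (m k)) - β (m k) • x (m k) := by
        rw [hx (m k) hn1, ← ht_eq (m k)]; module
      have hα' := hα (m k) hn1
      have hβ' := hβ (m k) hn1
      have hxK2 : ‖x (m k)‖ ≤ Mx + ‖z‖ := hxnorm (m k) hn1
      calc ‖x (m k + 1) - x (m k)‖
          = ‖α (m k) • (t (m k) - x (m k)) - β (m k) • x (m k)‖ := by rw [hdd]
        _ ≤ ‖α (m k) • (t (m k) - x (m k))‖ + ‖β (m k) • x (m k)‖ := norm_sub_le _ _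
        _ = α (m k) * ‖t (m k) - x (m k)‖ + β (m k) * ‖x (m k)‖ := by
            rw [norm_smul_of_nonneg hα'.1.le, norm_smul_of_nonneg hβ'.1.le]
        _ ≤ r (m k) + β (m k) * (Mx + ‖z‖) := by
            have e1 : ‖t (m k) - x (m k)‖ = r (m k) := by
              rw [hr_eq (m k)]; exact norm_sub_rev _ _
            rw [e1]
            have e2 : α (m k) * r (m k) ≤ r (m k) := by nlinarith [hα'.2, hα'.1, hr0 (m k)]
            have e3 := mul_le_mul_of_nonneg_left hxK2 hβ'.1.le
            linarith
    have h2 : Tendsto (fun k => ⟪-z, x (m k + 1) - x (m k)⟫) atTop (nhds 0) := by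
      apply squeeze_zero_norm (a := fun k => ‖z‖ * (r (m k) + β (m k) * (Mx + ‖z‖)))
      · intro k
        rw [Real.norm_eq_abs]
        calc |⟪-z, x (m k + 1) - x (m k)⟫| ≤ ‖-z‖ * ‖x (m k + 1) - x (m k)‖ :=
            abs_real_inner_le_norm _ _
          _ = ‖z‖ * ‖x (m k + 1) - x (m k)‖ := by rw [norm_neg]
          _ ≤ ‖z‖ * (r (m k) + β (m k) * (Mx + ‖z‖)) :=
            mul_le_mul_of_nonneg_left (hdstep k) (norm_nonneg _)
      · have hβm : Tendsto (fun k => β (m k)) atTop (nhds 0) := hβ0.comp hmt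
        have h5 := (hrm.add (hβm.mul_const (Mx + ‖z‖))).const_mul ‖z‖
        have h6 : ‖z‖ * ((0:ℝ) + 0 * (Mx + ‖z‖)) = 0 := by ring
        rwa [h6] at h5
    have hbbt : Tendsto (fun k => bb (m k)) atTop (nhds (2*⟪-z, wbar - z⟫)) := by
      have h3 := (h1.add h2).const_mul 2
      rw [add_zero] at h3
      apply h3.congr
      intro k
      have hsplit : x (m k + 1) - z = (x (m k) - z) + (x (m k + 1) - x (m k)) := by abel
      rw [hbb_eq, hsplit, inner_add_right]
    have hge : η ≤ 2*⟪-z, wbar - z⟫ :=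
      ge_of_tendsto hbbt (Eventually.of_forall fun k => hθp (φ₂ k))
    linarith
  -- conclude via the sequence lemma
  have haalim : Tendsto aa atTop (nhds 0) := by
    apply mainge aa bb β CC haa0 hbbb
      (fun n hn => ⟨(hβ n hn).1, (hβ n hn).2⟩) hβ0 hdiv ?_ hcrit
    intro n hn
    have h := hR2 n hn
    have hs : 0 ≤ ((1 - β n)*(α n)*c)*(r n)^2 :=
      mul_nonneg (mul_nonneg (mul_nonneg (by linarith [(hβ n hn).2]) (hα n hn).1.le)
        hcpos.le) (sq_nonneg _)
    linarith
  refine ⟨z, hzΩ, fun q hq => hzmin q hq, ?_⟩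
  rw [tendsto_iff_norm_sub_tendsto_zero]
  have h := haalim.sqrt
  rw [Real.sqrt_zero] at h
  apply h.congr
  intro n
  rw [haa_eq]
  exact Real.sqrt_sq (norm_nonneg _)
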